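/- Under the same assumptions (α > 0, β ≥ 0, G(t) = P(T > t) > 0 for all t, and x ↦ G(log x) regularly varying at ∞ with index -β), the function ℓ_t = inf{ℓ > 0 : e^{-αℓ} G(ℓ) ≤ e^{-αt}} satisfies lim_{t→∞} ℓ_t / t = α/(α + β). -/

import Mathlib

open MeasureTheory ProbabilityTheory Filter Set

private lemma aux_diff_to_div {u : ℕ → ℝ} {L : ℝ}
    (h : Tendsto (fun n => u (n + 1) - u n) atTop (nhds L)) :
    Tendsto (fun n : ℕ => u n / n) atTop (nhds L) := by
  have hces := h.cesaro
  have hsum : ∀ n : ℕ, ∑ i ∈ Finset.range n, (u (i + 1) - u i) = u n - u 0 :=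
    fun n => Finset.sum_range_sub u n
  have h0 : Tendsto (fun n : ℕ => u 0 / (n : ℝ)) atTop (nhds 0) :=
    tendsto_const_div_atTop_nhds_zero_nat (u 0)
  have := hces.add h0
  rw [add_zero] at this
  refine this.congr fun n => ?_
  rw [hsum]
  rcases eq_or_ne (n : ℝ) 0 with hn | hn
  · simp [hn]
  · field_simp
    ring

private lemma aux_log_div {G : ℝ → ℝ} {β : ℝ} (hGpos : ∀ t, 0 < G t)
    (hGanti : Antitone G)
    (hr : Tendsto (fun t => G (t + 1) / G t) atTop (nhds (Real.exp (-β)))) :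
    Tendsto (fun t => Real.log (G t) / t) atTop (nhds (-β)) := by
  set g : ℕ → ℝ := fun n => Real.log (G n) with hg
  have hdiff : Tendsto (fun n : ℕ => g (n + 1) - g n) atTop (nhds (-β)) := by
    have h1 : Tendsto (fun n : ℕ => G ((n : ℝ) + 1) / G n) atTop (nhds (Real.exp (-β))) :=
      hr.comp tendsto_natCast_atTop_atTop
    have h2 := (Real.continuousAt_log (Real.exp_ne_zero (-β))).tendsto.comp h1
    rw [Real.log_exp] at h2
    refine h2.congr fun n => ?_
    simp only [Function.comp_apply, hg]
    rw [Real.log_div (hGpos _).ne' (hGpos _).ne']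
    push_cast
    ring_nf
  have hnat : Tendsto (fun n : ℕ => g n / n) atTop (nhds (-β)) := aux_diff_to_div hdiff
  -- squeeze for real t
  have hceil : Tendsto (fun t : ℝ => g ⌈t⌉₊ / t) atTop (nhds (-β)) := by
    have h1 : Tendsto (fun t : ℝ => g ⌈t⌉₊ / (⌈t⌉₊ : ℝ)) atTop (nhds (-β)) :=
      hnat.comp tendsto_nat_ceil_atTop
    have h2 : Tendsto (fun t : ℝ => ((⌈t⌉₊ : ℝ) / t)) atTop (nhds 1) :=
      tendsto_nat_ceil_div_atTop
    have := h1.mul h2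
    rw [mul_one] at this
    refine this.congr' ?_
    filter_upwards [eventually_ge_atTop (1 : ℝ)] with t ht
    have h0 : (⌈t⌉₊ : ℝ) ≠ 0 := by
      have : (1:ℕ) ≤ ⌈t⌉₊ := Nat.one_le_ceil_iff.mpr (by linarith)
      positivity
    field_simp
  have hfloor : Tendsto (fun t : ℝ => g ⌊t⌋₊ / t) atTop (nhds (-β)) := by
    have h1 : Tendsto (fun t : ℝ => g ⌊t⌋₊ / (⌊t⌋₊ : ℝ)) atTop (nhds (-β)) :=
      hnat.comp tendsto_nat_floor_atTop
    have h2 : Tendsto (fun t : ℝ => ((⌊t⌋₊ : ℝ) / t)) atTop (nhds 1) :=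
      tendsto_nat_floor_div_atTop
    have := h1.mul h2
    rw [mul_one] at this
    refine this.congr' ?_
    filter_upwards [eventually_ge_atTop (1 : ℝ)] with t ht
    have h0 : (⌊t⌋₊ : ℝ) ≠ 0 := by
      have : (1:ℕ) ≤ ⌊t⌋₊ := Nat.one_le_floor_iff _ |>.mpr ht
      positivity
    field_simp
  refine tendsto_of_tendsto_of_tendsto_of_le_of_le' hceil hfloor ?_ ?_
  · filter_upwards [eventually_ge_atTop (1 : ℝ)] with t ht
    have htpos : (0:ℝ) < t := by linarith
    have : G (⌈t⌉₊ : ℝ) ≤ G t := hGanti (Nat.le_ceil t)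
    have hlog : g ⌈t⌉₊ ≤ Real.log (G t) := Real.log_le_log (hGpos _) this
    exact div_le_div_of_nonneg_right hlog htpos.le
  · filter_upwards [eventually_ge_atTop (1 : ℝ)] with t ht
    have htpos : (0:ℝ) < t := by linarith
    have : G t ≤ G (⌊t⌋₊ : ℝ) := hGanti (Nat.floor_le (by linarith))
    have hlog : Real.log (G t) ≤ g ⌊t⌋₊ := Real.log_le_log (hGpos _) this
    exact div_le_div_of_nonneg_right hlog htpos.le

private lemma aux_key {G : ℝ → ℝ} {β : ℝ} (hGpos : ∀ t, 0 < G t)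
    (hlog : Tendsto (fun t => Real.log (G t) / t) atTop (nhds (-β)))
    (α c : ℝ) (hc : 0 < c) :
    Tendsto (fun t => (Real.log (Real.exp (-α * (c * t)) * G (c * t)) + α * t) / t)
      atTop (nhds (α - (α + β) * c)) := by
  have hct : Tendsto (fun t : ℝ => c * t) atTop atTop := tendsto_id.const_mul_atTop hc
  have h1 : Tendsto (fun t : ℝ => α - α * c + c * (Real.log (G (c * t)) / (c * t)))
      atTop (nhds (α - α * c + c * (-β))) :=
    tendsto_const_nhds.add ((hlog.comp hct).const_mul c)
  have heq : α - α * c + c * (-β) = α - (α + β) * c := by ring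
  rw [heq] at h1
  refine h1.congr' ?_
  filter_upwards [eventually_gt_atTop (0 : ℝ)] with t ht
  have hct0 : c * t ≠ 0 := by positivity
  rw [Real.log_mul (Real.exp_ne_zero _) (hGpos _).ne', Real.log_exp]
  field_simp
  ring

/-- Lemma 2.2: under the regular-tail assumption, the characteristic length
`ℓ_t = inf{ℓ > 0 : e^{-αℓ} P(T > ℓ) ≤ e^{-αt}}` satisfies `ℓ_t / t → α/(α+β)`. -/
theorem char_length_linear_growth
    {Ω : Type*} [MeasurableSpace Ω] (P : Measure Ω) [IsProbabilityMeasure P]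
    (T : Ω → ℝ) (hT : Measurable T) (α β : ℝ) (hα : 0 < α) (hβ : 0 ≤ β)
    (hT0 : P {ω | T ω ≤ 0} = 0)
    (hpos : ∀ t : ℝ, 0 < (P {ω | t < T ω}).toReal)
    (hratio : ∀ a : ℝ, 0 ≤ a →
      Tendsto (fun t : ℝ => (P {ω | t + a < T ω}).toReal / (P {ω | t < T ω}).toReal)
        atTop (nhds (Real.exp (-β * a))))
    (ℓ : ℝ → ℝ)
    (hℓ : ∀ t : ℝ, ℓ t = sInf {l : ℝ | 0 < l ∧
      Real.exp (-α * l) * (P {ω | l < T ω}).toReal ≤ Real.exp (-α * t)}) :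
    Tendsto (fun t : ℝ => ℓ t / t) atTop (nhds (α / (α + β))) := by
  set G : ℝ → ℝ := fun l => (P {ω | l < T ω}).toReal with hG
  have hGpos : ∀ t, 0 < G t := hpos
  have hG1 : ∀ t, G t ≤ 1 := by
    intro t
    have h := prob_le_one (μ := P) (s := {ω | t < T ω})
    have := ENNReal.toReal_mono ENNReal.one_ne_top h
    simpa using this
  have hGanti : Antitone G := by
    intro a b hab
    exact ENNReal.toReal_mono (measure_ne_top P _)
      (measure_mono fun ω hω => lt_of_le_of_lt hab hω)
  have hαβ : 0 < α + β := by linarith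
  set γ : ℝ := α / (α + β) with hγ
  have hγpos : 0 < γ := div_pos hα hαβ
  have hr1 : Tendsto (fun t => G (t + 1) / G t) atTop (nhds (Real.exp (-β))) := by
    have := hratio 1 zero_le_one
    simpa using this
  have hlog : Tendsto (fun t => Real.log (G t) / t) atTop (nhds (-β)) :=
    aux_log_div hGpos hGanti hr1
  -- the sets
  set S : ℝ → Set ℝ := fun t => {l : ℝ | 0 < l ∧
      Real.exp (-α * l) * G l ≤ Real.exp (-α * t)} with hS
  have hSne : ∀ t : ℝ, (S t).Nonempty := by
    intro t
    refine ⟨max t 1, lt_of_lt_of_le one_pos (le_max_right t 1), ?_⟩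
    calc Real.exp (-α * max t 1) * G (max t 1)
        ≤ Real.exp (-α * max t 1) * 1 := by
          exact mul_le_mul_of_nonneg_left (hG1 _) (Real.exp_pos _).le
      _ = Real.exp (-α * max t 1) := mul_one _
      _ ≤ Real.exp (-α * t) := by
          apply Real.exp_le_exp.mpr
          nlinarith [le_max_left t 1]
  have hSbdd : ∀ t : ℝ, BddBelow (S t) := fun t => ⟨0, fun l hl => hl.1.le⟩
  have hfanti : Antitone (fun l => Real.exp (-α * l) * G l) := by
    intro a b hab
    exact mul_le_mul (Real.exp_le_exp.mpr (by nlinarith)) (hGanti hab)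
      (hGpos b).le (Real.exp_pos _).le
  rw [Metric.tendsto_nhds]
  intro ε hε
  set c₁ : ℝ := max (γ - ε / 2) (γ / 2) with hc₁
  have hc₁pos : 0 < c₁ := lt_of_lt_of_le (by linarith) (le_max_right _ _)
  have hc₁lt : c₁ < γ := max_lt (by linarith) (by linarith)
  set c₂ : ℝ := γ + ε / 2 with hc₂
  have hc₂pos : 0 < c₂ := by rw [hc₂]; linarith
  have hc₂gt : γ < c₂ := by rw [hc₂]; linarith
  -- lower bound eventually
  have hkey₁ := aux_key hGpos hlog α c₁ hc₁pos
  have hlim₁ : 0 < α - (α + β) * c₁ := by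
    have : (α + β) * c₁ < (α + β) * γ := by
      exact mul_lt_mul_of_pos_left hc₁lt hαβ
    have hγval : (α + β) * γ = α := by
      rw [hγ, mul_div_assoc']; exact mul_div_cancel_left₀ α hαβ.ne'
    linarith
  have hev₁ : ∀ᶠ t in atTop,
      0 < (Real.log (Real.exp (-α * (c₁ * t)) * G (c₁ * t)) + α * t) / t :=
    hkey₁.eventually (eventually_gt_nhds hlim₁)
  have hkey₂ := aux_key hGpos hlog α c₂ hc₂pos
  have hlim₂ : α - (α + β) * c₂ < 0 := by
    have : (α + β) * γ < (α + β) * c₂ := mul_lt_mul_of_pos_left hc₂gt hαβ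
    have hγval : (α + β) * γ = α := by rw [hγ, mul_div_assoc']; exact mul_div_cancel_left₀ α hαβ.ne'
    linarith
  have hev₂ : ∀ᶠ t in atTop,
      (Real.log (Real.exp (-α * (c₂ * t)) * G (c₂ * t)) + α * t) / t < 0 :=
    hkey₂.eventually (eventually_lt_nhds hlim₂)
  filter_upwards [hev₁, hev₂, eventually_ge_atTop (1 : ℝ)] with t h₁ h₂ ht
  have htpos : (0 : ℝ) < t := by linarith
  -- upper bound: c₂ * t ∈ S t
  have hmem : c₂ * t ∈ S t := by
    refine ⟨mul_pos hc₂pos htpos, ?_⟩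
    have hnum : Real.log (Real.exp (-α * (c₂ * t)) * G (c₂ * t)) + α * t < 0 := by
      by_contra h
      push_neg at h
      have := div_nonneg h htpos.le
      linarith
    have hfpos : 0 < Real.exp (-α * (c₂ * t)) * G (c₂ * t) := mul_pos (Real.exp_pos _) (hGpos _)
    have := Real.exp_lt_exp.mpr (show Real.log (Real.exp (-α * (c₂ * t)) * G (c₂ * t)) < -α * t by linarith)
    rw [Real.exp_log hfpos] at this
    exact this.le
  have hub : ℓ t ≤ c₂ * t := by
    rw [hℓ t]
    exact csInf_le (hSbdd t) hmem
  -- lower bound: c₁ * t is a lower bound of S t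
  have hlb : c₁ * t ≤ ℓ t := by
    rw [hℓ t]
    refine le_csInf (hSne t) ?_
    intro l hl
    by_contra hlt
    push_neg at hlt
    have hfl : Real.exp (-α * t) < Real.exp (-α * (c₁ * t)) * G (c₁ * t) := by
      have hnum : 0 < Real.log (Real.exp (-α * (c₁ * t)) * G (c₁ * t)) + α * t := by
        by_contra h
        push_neg at h
        have := div_nonpos_of_nonpos_of_nonneg h htpos.le
        linarith
      have hfpos : 0 < Real.exp (-α * (c₁ * t)) * G (c₁ * t) := mul_pos (Real.exp_pos _) (hGpos _)
      have := Real.exp_lt_exp.mpr (show -α * t < Real.log (Real.exp (-α * (c₁ * t)) * G (c₁ * t)) by linarith)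
      rwa [Real.exp_log hfpos] at this
    have hmono : Real.exp (-α * (c₁ * t)) * G (c₁ * t) ≤ Real.exp (-α * l) * G l :=
      hfanti hlt.le
    have := hl.2
    linarith
  -- conclude
  have h₁' : c₁ ≤ ℓ t / t := (le_div_iff₀ htpos).mpr (by linarith [hlb])
  have h₂' : ℓ t / t ≤ c₂ := (div_le_iff₀ htpos).mpr (by linarith [hub])
  have hge : γ - ε / 2 ≤ ℓ t / t := le_trans (le_max_left _ _) h₁'
  rw [Real.dist_eq, abs_lt]
  constructor <;> [skip; skip] <;> simp only [hc₂] at h₂' <;> linarith
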